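/- Let A and B be m×m complex idempotent matrices (A² = A, B² = B) and let k ≥ 1 be an integer. Then rank((A·B)^k − (B·A)^k) = rank(colBlock(A, B)) + rank(rowBlock(A, B)) + rank((A·B)^k) + rank((B·A)^k) − 2·rank(A) − 2·rank(B). -/

import Mathlib

open Matrix Module Finset

section aux
variable {R : Type*} [Ring R]

lemma idem_aux1 {b : R} (a : R) (hb : b * b = b) (n : ℕ) :
    (a * b) ^ (n + 1) * b = (a * b) ^ (n + 1) := by
  rw [pow_succ, mul_assoc, mul_assoc, hb]

lemma idem_aux2 {a : R} (b : R) (ha : a * a = a) (n : ℕ) :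
    a * (a * b) ^ (n + 1) = (a * b) ^ (n + 1) := by
  rw [pow_succ', ← mul_assoc, ← mul_assoc, ha]

lemma semi_aux (a b : R) (n : ℕ) : a * (b * a) ^ n = (a * b) ^ n * a :=
  SemiconjBy.pow_right ((mul_assoc a b a).symm) n

end aux

theorem stmt_5 (m : ℕ) (A B : Matrix (Fin m) (Fin m) ℂ)
    (hA : A * A = A) (hB : B * B = B) (k : ℕ) (hk : 1 ≤ k) :
    (((A * B) ^ k - (B * A) ^ k).rank : ℤ) =
      ((Matrix.fromRows A B).rank : ℤ) + ((Matrix.fromCols A B).rank : ℤ)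
        + (((A * B) ^ k).rank : ℤ) + (((B * A) ^ k).rank : ℤ)
        - 2 * (A.rank : ℤ) - 2 * (B.rank : ℤ) := by
  obtain ⟨n, rfl⟩ : ∃ n, k = n + 1 := ⟨k - 1, by omega⟩
  set P : Matrix (Fin m) (Fin m) ℂ := A * B with hPdef
  set Q : Matrix (Fin m) (Fin m) ℂ := B * A with hQdef
  set T : Matrix (Fin m) (Fin m) ℂ := P ^ (n + 1) with hTdef
  set S : Matrix (Fin m) (Fin m) ℂ := Q ^ (n + 1) with hSdef
  -- matrix identities
  have hTB : T * B = T := idem_aux1 A hB n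
  have hAT : A * T = T := idem_aux2 B hA n
  have hSA : S * A = S := idem_aux1 B hA n
  have hBS : B * S = S := idem_aux2 A hB n
  have hTA : T * A = A * S := (semi_aux A B (n + 1)).symm
  have hSB : S * B = B * T := (semi_aux B A (n + 1)).symm
  have hAP : A * P = P := by rw [hPdef, ← mul_assoc, hA]
  have hSP : S * P = B * T := by rw [hPdef, ← mul_assoc, hSA, hSB]
  have hTfactB : (P ^ n * A) * B = T := by rw [mul_assoc, hTdef, ← hPdef, ← pow_succ]
  have hSfactA : (Q ^ n * B) * A = S := by rw [mul_assoc, hSdef, ← hQdef, ← pow_succ]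
  have hTfactA : T = A * (B * P ^ n) := by rw [hTdef, pow_succ', hPdef, mul_assoc]
  have hSfactB : S = B * (A * Q ^ n) := by rw [hSdef, pow_succ', hQdef, mul_assoc]
  -- geometric sums
  set N₀ : Matrix (Fin m) (Fin m) ℂ := ∑ i ∈ range n, P ^ i with hN₀def
  set N : Matrix (Fin m) (Fin m) ℂ := ∑ i ∈ range (n + 1), P ^ i with hNdef
  have gN : N = P * N₀ + 1 := geom_sum_succ
  have gPN : P * N = T + N - 1 := by
    rw [eq_sub_iff_add_eq]
    exact (geom_sum_succ (x := P) (n := n + 1)).symm.trans (geom_sum_succ' (x := P) (n := n + 1))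
  have gC : T * N₀ = N₀ * T := by
    rw [Finset.mul_sum, Finset.sum_mul]
    exact Finset.sum_congr rfl fun i _ => by rw [← pow_add, ← pow_add, add_comm]
  have gTN : T * N = N * T := by
    rw [Finset.mul_sum, Finset.sum_mul]
    exact Finset.sum_congr rfl fun i _ => by rw [← pow_add, ← pow_add, add_comm]
  have gAN : A * N = N - 1 + A := by
    rw [gN, mul_add, mul_one, ← mul_assoc, hAP, add_sub_cancel_right]
  have gSN : S * N = (B * N₀) * T + S := by
    rw [gN, mul_add, mul_one, ← mul_assoc, hSP, mul_assoc, gC, ← mul_assoc]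
  -- generic membership helpers
  have mem_ker_iff : ∀ (X : Matrix (Fin m) (Fin m) ℂ) (x : Fin m → ℂ),
      x ∈ LinearMap.ker X.mulVecLin ↔ X *ᵥ x = 0 := fun X x => by
    simp [LinearMap.mem_ker, mulVecLin_apply]
  have mem_range_iff : ∀ (X : Matrix (Fin m) (Fin m) ℂ) (x : Fin m → ℂ),
      x ∈ LinearMap.range X.mulVecLin ↔ ∃ c, X *ᵥ c = x := fun X x => by
    simp [LinearMap.mem_range, mulVecLin_apply]
  have fix : ∀ (X : Matrix (Fin m) (Fin m) ℂ), X * X = X → ∀ y,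
      y ∈ LinearMap.range X.mulVecLin → X *ᵥ y = y := by
    intro X hX y hy
    obtain ⟨c, hc⟩ := (mem_range_iff X y).mp hy
    rw [← hc, mulVec_mulVec, hX]
  have powfix : ∀ (X : Matrix (Fin m) (Fin m) ℂ) (z : Fin m → ℂ), X *ᵥ z = z →
      ∀ j, X ^ j *ᵥ z = z := by
    intro X z hz j
    induction j with
    | zero => simp
    | succ j ih => rw [pow_succ', ← mulVec_mulVec, ih, hz]
  have fixT : ∀ y : Fin m → ℂ, A *ᵥ y = y → B *ᵥ y = y → T *ᵥ y = y := by
    intro y h1 h2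
    rw [hTdef]
    exact powfix P y (by rw [hPdef, ← mulVec_mulVec, h2, h1]) (n + 1)
  have fixS : ∀ y : Fin m → ℂ, A *ᵥ y = y → B *ᵥ y = y → S *ᵥ y = y := by
    intro y h1 h2
    rw [hSdef]
    exact powfix Q y (by rw [hQdef, ← mulVec_mulVec, h1, h2]) (n + 1)
  -- submodules
  set KA := LinearMap.ker A.mulVecLin with hKAdef
  set KB := LinearMap.ker B.mulVecLin with hKBdef
  set KT := LinearMap.ker T.mulVecLin with hKTdef
  set KS := LinearMap.ker S.mulVecLin with hKSdef
  set RA := LinearMap.range A.mulVecLin with hRAdef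
  set RB := LinearMap.range B.mulVecLin with hRBdef
  set K := LinearMap.ker (T - S).mulVecLin with hKdef
  -- S1 : K = (RA ⊓ RB) ⊔ (KT ⊓ KS)
  have S1 : K = (RA ⊓ RB) ⊔ (KT ⊓ KS) := by
    apply le_antisymm
    · intro x hx
      rw [hKdef, mem_ker_iff, sub_mulVec, sub_eq_zero] at hx
      set y := T *ᵥ x with hydef
      have hyRA : y ∈ RA := by
        rw [hRAdef, mem_range_iff]
        exact ⟨(B * P ^ n) *ᵥ x, by rw [mulVec_mulVec, ← hTfactA]⟩
      have hyRB : y ∈ RB := by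
        rw [hRBdef, mem_range_iff]
        refine ⟨(A * Q ^ n) *ᵥ x, ?_⟩
        rw [mulVec_mulVec, ← hSfactB]
        exact hx.symm
      have hAy := fix A hA y hyRA
      have hBy := fix B hB y hyRB
      have hTy : T *ᵥ y = y := fixT y hAy hBy
      have hSy : S *ᵥ y = y := fixS y hAy hBy
      have hxy : x = y + (x - y) := by abel
      rw [hxy]
      refine Submodule.add_mem_sup (Submodule.mem_inf.mpr ⟨hyRA, hyRB⟩)
        (Submodule.mem_inf.mpr ⟨?_, ?_⟩)
      · rw [hKTdef, mem_ker_iff, mulVec_sub, ← hydef, hTy, sub_self]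
      · rw [hKSdef, mem_ker_iff, mulVec_sub, ← hx, hSy, sub_self]
    · apply sup_le
      · intro y hy
        obtain ⟨hyA, hyB⟩ := Submodule.mem_inf.mp hy
        rw [hKdef, mem_ker_iff, sub_mulVec, fixT y (fix A hA y hyA) (fix B hB y hyB),
          fixS y (fix A hA y hyA) (fix B hB y hyB), sub_self]
      · intro x hx
        obtain ⟨h1, h2⟩ := Submodule.mem_inf.mp hx
        rw [hKTdef, mem_ker_iff] at h1
        rw [hKSdef, mem_ker_iff] at h2
        rw [hKdef, mem_ker_iff, sub_mulVec, h1, h2, sub_self]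
  -- S2 : disjointness
  have S2 : (RA ⊓ RB) ⊓ (KT ⊓ KS) = ⊥ := by
    rw [eq_bot_iff]
    intro y hy
    obtain ⟨hy1, hy2⟩ := Submodule.mem_inf.mp hy
    obtain ⟨hyA, hyB⟩ := Submodule.mem_inf.mp hy1
    obtain ⟨hyT, _⟩ := Submodule.mem_inf.mp hy2
    have h1 : T *ᵥ y = y := fixT y (fix A hA y hyA) (fix B hB y hyB)
    rw [hKTdef, mem_ker_iff] at hyT
    simp only [Submodule.mem_bot]
    rw [← h1, hyT]
  -- S3 : the key decomposition
  have S3 : KT ⊓ KS = (KA ⊓ KB) ⊔ (KT ⊓ RB) ⊔ (KS ⊓ RA) := by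
    apply le_antisymm
    · intro z hz
      obtain ⟨hzT, hzS⟩ := Submodule.mem_inf.mp hz
      rw [hKTdef, mem_ker_iff] at hzT
      rw [hKSdef, mem_ker_iff] at hzS
      set z' : Fin m → ℂ := z - B *ᵥ z with hz'def
      set a : Fin m → ℂ := A *ᵥ z' with hadef
      set v : Fin m → ℂ := N *ᵥ a with hvdef
      set u : Fin m → ℂ := B *ᵥ (z - v) with hudef
      set w : Fin m → ℂ := z - u - v with hwdef
      have hSz' : S *ᵥ z' = 0 := by
        rw [hz'def, mulVec_sub, hzS, zero_sub, mulVec_mulVec, hSB, ← mulVec_mulVec, hzT,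
          mulVec_zero, neg_zero]
      have hTa : T *ᵥ a = 0 := by
        rw [hadef, mulVec_mulVec, hTA, ← mulVec_mulVec, hSz', mulVec_zero]
      have hSa : S *ᵥ a = 0 := by
        rw [hadef, mulVec_mulVec, hSA, hSz']
      have hAa : A *ᵥ a = a := by rw [hadef, mulVec_mulVec, hA]
      have hTv : T *ᵥ v = 0 := by
        rw [hvdef, mulVec_mulVec, gTN, ← mulVec_mulVec, hTa, mulVec_zero]
      have hSv : S *ᵥ v = 0 := by
        rw [hvdef, mulVec_mulVec, gSN, add_mulVec, ← mulVec_mulVec, hTa, mulVec_zero, hSa,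
          add_zero]
      have hAv : A *ᵥ v = v := by
        rw [hvdef, mulVec_mulVec, gAN, add_mulVec, sub_mulVec, one_mulVec, hAa]
        abel
      have hTu : T *ᵥ u = 0 := by
        rw [hudef, mulVec_mulVec, hTB, mulVec_sub, hzT, hTv, sub_zero]
      have hPv : P *ᵥ v = v - a := by
        rw [hvdef, mulVec_mulVec, gPN, sub_mulVec, add_mulVec, one_mulVec, hTa, zero_add]
      have ha' : a = A *ᵥ z - P *ᵥ z := by
        rw [hadef, hz'def, mulVec_sub, mulVec_mulVec, ← hPdef]
      have hBw : B *ᵥ w = 0 := by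
        rw [hwdef, hudef]
        simp only [mulVec_sub, mulVec_mulVec, hB]
        abel
      have hAw : A *ᵥ w = 0 := by
        rw [hwdef, hudef]
        simp only [mulVec_sub, mulVec_mulVec, ← hPdef]
        rw [hPv, hAv, ha']
        abel
      have hzdecomp : z = (w + u) + v := by rw [hwdef]; abel
      rw [hzdecomp]
      refine Submodule.add_mem_sup (Submodule.add_mem_sup (Submodule.mem_inf.mpr ⟨?_, ?_⟩)
        (Submodule.mem_inf.mpr ⟨?_, ?_⟩)) (Submodule.mem_inf.mpr ⟨?_, ?_⟩)
      · rw [hKAdef, mem_ker_iff]; exact hAw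
      · rw [hKBdef, mem_ker_iff]; exact hBw
      · rw [hKTdef, mem_ker_iff]; exact hTu
      · rw [hRBdef, mem_range_iff]; exact ⟨z - v, hudef.symm⟩
      · rw [hKSdef, mem_ker_iff]; exact hSv
      · rw [hRAdef, mem_range_iff]; exact ⟨v, hAv⟩
    · apply sup_le
      · apply sup_le
        · intro x hx
          obtain ⟨hxA, hxB⟩ := Submodule.mem_inf.mp hx
          rw [hKAdef, mem_ker_iff] at hxA
          rw [hKBdef, mem_ker_iff] at hxB
          refine Submodule.mem_inf.mpr ⟨?_, ?_⟩
          · rw [hKTdef, mem_ker_iff, ← hTfactB, ← mulVec_mulVec, hxB, mulVec_zero]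
          · rw [hKSdef, mem_ker_iff, ← hSfactA, ← mulVec_mulVec, hxA, mulVec_zero]
        · intro x hx
          obtain ⟨hxT, hxRB⟩ := Submodule.mem_inf.mp hx
          have hBx : B *ᵥ x = x := fix B hB x (by rw [hRBdef] at hxRB; exact hxRB)
          rw [hKTdef, mem_ker_iff] at hxT
          refine Submodule.mem_inf.mpr ⟨?_, ?_⟩
          · rw [hKTdef, mem_ker_iff]; exact hxT
          · rw [hKSdef, mem_ker_iff, ← hBx, mulVec_mulVec, hSB, ← mulVec_mulVec, hxT,
              mulVec_zero]
      · intro x hx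
        obtain ⟨hxS, hxRA⟩ := Submodule.mem_inf.mp hx
        have hAx : A *ᵥ x = x := fix A hA x (by rw [hRAdef] at hxRA; exact hxRA)
        rw [hKSdef, mem_ker_iff] at hxS
        refine Submodule.mem_inf.mpr ⟨?_, ?_⟩
        · rw [hKTdef, mem_ker_iff, ← hAx, mulVec_mulVec, hTA, ← mulVec_mulVec, hxS,
            mulVec_zero]
        · rw [hKSdef, mem_ker_iff]; exact hxS
  -- S4
  have S4 : (KA ⊓ KB) ⊓ (KT ⊓ RB) = ⊥ := by
    rw [eq_bot_iff]
    intro x hx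
    obtain ⟨hx1, hx2⟩ := Submodule.mem_inf.mp hx
    obtain ⟨_, hxB⟩ := Submodule.mem_inf.mp hx1
    obtain ⟨_, hxRB⟩ := Submodule.mem_inf.mp hx2
    have h1 : B *ᵥ x = x := fix B hB x (by rw [hRBdef] at hxRB; exact hxRB)
    rw [hKBdef, mem_ker_iff] at hxB
    simp only [Submodule.mem_bot]
    rw [← h1, hxB]
  -- S5
  have S5 : ((KA ⊓ KB) ⊔ (KT ⊓ RB)) ⊓ (KS ⊓ RA) = ⊥ := by
    rw [eq_bot_iff]
    intro z hz
    obtain ⟨hzsup, hz2⟩ := Submodule.mem_inf.mp hz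
    obtain ⟨hzS, hzRA⟩ := Submodule.mem_inf.mp hz2
    have hAz : A *ᵥ z = z := fix A hA z (by rw [hRAdef] at hzRA; exact hzRA)
    rw [hKSdef, mem_ker_iff] at hzS
    obtain ⟨x, hx, y, hy, hxy⟩ := Submodule.mem_sup.mp hzsup
    obtain ⟨hxA, hxB⟩ := Submodule.mem_inf.mp hx
    obtain ⟨_, hyRB⟩ := Submodule.mem_inf.mp hy
    rw [hKAdef, mem_ker_iff] at hxA
    rw [hKBdef, mem_ker_iff] at hxB
    have hBy : B *ᵥ y = y := fix B hB y (by rw [hRBdef] at hyRB; exact hyRB)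
    have hBz : B *ᵥ z = y := by rw [← hxy, mulVec_add, hxB, zero_add, hBy]
    have hxzy : x = z - B *ᵥ z := by rw [hBz, ← hxy]; abel
    have hPz : P *ᵥ z = z := by
      rw [hxzy, mulVec_sub, mulVec_mulVec, ← hPdef, hAz, sub_eq_zero] at hxA
      exact hxA.symm
    have h1 : T *ᵥ z = z := by rw [hTdef]; exact powfix P z hPz (n + 1)
    have h2 : T *ᵥ z = 0 := by
      rw [← hAz, mulVec_mulVec, hTA, ← mulVec_mulVec, hzS, mulVec_zero]
    simp only [Submodule.mem_bot]
    rw [← h1, h2]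
  -- S6
  have S6 : KT = KB ⊔ (KT ⊓ RB) := by
    apply le_antisymm
    · intro z hz
      rw [hKTdef, mem_ker_iff] at hz
      have hzd : z = (z - B *ᵥ z) + B *ᵥ z := by abel
      rw [hzd]
      refine Submodule.add_mem_sup ?_ (Submodule.mem_inf.mpr ⟨?_, ?_⟩)
      · rw [hKBdef, mem_ker_iff, mulVec_sub, mulVec_mulVec, hB, sub_self]
      · rw [hKTdef, mem_ker_iff, mulVec_mulVec, hTB, hz]
      · rw [hRBdef, mem_range_iff]; exact ⟨z, rfl⟩
    · apply sup_le
      · intro z hz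
        rw [hKBdef, mem_ker_iff] at hz
        rw [hKTdef, mem_ker_iff, ← hTfactB, ← mulVec_mulVec, hz, mulVec_zero]
      · exact inf_le_left
  have S6' : KB ⊓ (KT ⊓ RB) = ⊥ := by
    rw [eq_bot_iff]
    intro x hx
    obtain ⟨hxB, hx2⟩ := Submodule.mem_inf.mp hx
    obtain ⟨_, hxRB⟩ := Submodule.mem_inf.mp hx2
    have h1 : B *ᵥ x = x := fix B hB x (by rw [hRBdef] at hxRB; exact hxRB)
    rw [hKBdef, mem_ker_iff] at hxB
    simp only [Submodule.mem_bot]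
    rw [← h1, hxB]
  -- S7
  have S7 : KS = KA ⊔ (KS ⊓ RA) := by
    apply le_antisymm
    · intro z hz
      rw [hKSdef, mem_ker_iff] at hz
      have hzd : z = (z - A *ᵥ z) + A *ᵥ z := by abel
      rw [hzd]
      refine Submodule.add_mem_sup ?_ (Submodule.mem_inf.mpr ⟨?_, ?_⟩)
      · rw [hKAdef, mem_ker_iff, mulVec_sub, mulVec_mulVec, hA, sub_self]
      · rw [hKSdef, mem_ker_iff, mulVec_mulVec, hSA, hz]
      · rw [hRAdef, mem_range_iff]; exact ⟨z, rfl⟩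
    · apply sup_le
      · intro z hz
        rw [hKAdef, mem_ker_iff] at hz
        rw [hKSdef, mem_ker_iff, ← hSfactA, ← mulVec_mulVec, hz, mulVec_zero]
      · exact inf_le_left
  have S7' : KA ⊓ (KS ⊓ RA) = ⊥ := by
    rw [eq_bot_iff]
    intro x hx
    obtain ⟨hxA, hx2⟩ := Submodule.mem_inf.mp hx
    obtain ⟨_, hxRA⟩ := Submodule.mem_inf.mp hx2
    have h1 : A *ᵥ x = x := fix A hA x (by rw [hRAdef] at hxRA; exact hxRA)
    rw [hKAdef, mem_ker_iff] at hxA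
    simp only [Submodule.mem_bot]
    rw [← h1, hxA]
  -- S8
  have S8 : LinearMap.ker (fromRows A B).mulVecLin = KA ⊓ KB := by
    ext x
    rw [LinearMap.mem_ker, mulVecLin_apply, fromRows_mulVec, Submodule.mem_inf]
    constructor
    · intro h
      refine ⟨?_, ?_⟩
      · rw [hKAdef, mem_ker_iff]
        exact funext fun i => congrFun h (Sum.inl i)
      · rw [hKBdef, mem_ker_iff]
        exact funext fun i => congrFun h (Sum.inr i)
    · rintro ⟨h1, h2⟩
      rw [hKAdef, mem_ker_iff] at h1
      rw [hKBdef, mem_ker_iff] at h2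
      rw [h1, h2]
      funext j
      cases j <;> rfl
  -- S9
  have S9 : LinearMap.range (fromCols A B).mulVecLin = RA ⊔ RB := by
    apply le_antisymm
    · rintro x hx
      obtain ⟨c, rfl⟩ := hx
      rw [mulVecLin_apply, ← Sum.elim_comp_inl_inr c, fromCols_mulVec_sumElim]
      refine Submodule.add_mem_sup ?_ ?_
      · rw [hRAdef, mem_range_iff]; exact ⟨c ∘ Sum.inl, rfl⟩
      · rw [hRBdef, mem_range_iff]; exact ⟨c ∘ Sum.inr, rfl⟩
    · apply sup_le
      · rintro x hx
        rw [hRAdef, mem_range_iff] at hx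
        obtain ⟨c, hc⟩ := hx
        exact ⟨Sum.elim c 0, by rw [mulVecLin_apply, fromCols_mulVec_sumElim, mulVec_zero,
          add_zero, hc]⟩
      · rintro x hx
        rw [hRBdef, mem_range_iff] at hx
        obtain ⟨c, hc⟩ := hx
        exact ⟨Sum.elim 0 c, by rw [mulVecLin_apply, fromCols_mulVec_sumElim, mulVec_zero,
          zero_add, hc]⟩
  -- dimension bookkeeping
  have hVdim : finrank ℂ (Fin m → ℂ) = m := Module.finrank_fin_fun ℂ
  have FS : ∀ p q : Submodule ℂ (Fin m → ℂ), p ⊓ q = ⊥ →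
      finrank ℂ ↥(p ⊔ q) = finrank ℂ ↥p + finrank ℂ ↥q := by
    intro p q h
    have h2 := Submodule.finrank_sup_add_finrank_inf_eq p q
    rw [h, finrank_bot] at h2
    omega
  have E1 : (T - S).rank + finrank ℂ ↥K = m := by
    have h := LinearMap.finrank_range_add_finrank_ker (T - S).mulVecLin
    rw [hVdim] at h
    rw [hKdef]
    exact h
  have E6a : T.rank + finrank ℂ ↥KT = m := by
    have h := LinearMap.finrank_range_add_finrank_ker T.mulVecLin
    rw [hVdim] at h
    rw [hKTdef]
    exact h
  have E6b : S.rank + finrank ℂ ↥KS = m := by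
    have h := LinearMap.finrank_range_add_finrank_ker S.mulVecLin
    rw [hVdim] at h
    rw [hKSdef]
    exact h
  have E7a : A.rank + finrank ℂ ↥KA = m := by
    have h := LinearMap.finrank_range_add_finrank_ker A.mulVecLin
    rw [hVdim] at h
    rw [hKAdef]
    exact h
  have E7b : B.rank + finrank ℂ ↥KB = m := by
    have h := LinearMap.finrank_range_add_finrank_ker B.mulVecLin
    rw [hVdim] at h
    rw [hKBdef]
    exact h
  have E8 : (fromRows A B).rank + finrank ℂ ↥(KA ⊓ KB) = m := by
    have h := LinearMap.finrank_range_add_finrank_ker (fromRows A B).mulVecLin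
    rw [hVdim, S8] at h
    exact h
  have E9 : (fromCols A B).rank + finrank ℂ ↥(RA ⊓ RB) = A.rank + B.rank := by
    have h2 := Submodule.finrank_sup_add_finrank_inf_eq RA RB
    rw [← S9] at h2
    have hra : A.rank = finrank ℂ ↥RA := by rw [hRAdef]; rfl
    have hrb : B.rank = finrank ℂ ↥RB := by rw [hRBdef]; rfl
    rw [hra, hrb]
    exact h2
  have E2 : finrank ℂ ↥K = finrank ℂ ↥(RA ⊓ RB) + finrank ℂ ↥(KT ⊓ KS) := by
    rw [S1]
    exact FS _ _ S2
  have E3 : finrank ℂ ↥(KT ⊓ KS) =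
      finrank ℂ ↥(KA ⊓ KB) + finrank ℂ ↥(KT ⊓ RB) + finrank ℂ ↥(KS ⊓ RA) := by
    rw [S3, FS _ _ S5, FS _ _ S4]
  have E4 : finrank ℂ ↥KT = finrank ℂ ↥KB + finrank ℂ ↥(KT ⊓ RB) := by
    conv_lhs => rw [S6]
    exact FS _ _ S6'
  have E5 : finrank ℂ ↥KS = finrank ℂ ↥KA + finrank ℂ ↥(KS ⊓ RA) := by
    conv_lhs => rw [S7]
    exact FS _ _ S7'
  omega
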